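/- arXiv:1006.3437 — 9 statements merged into one kernel-verified Lean document; each statement's English description precedes it below -/
import Mathlib

section
/- Let τ = (−1+i√7)/2 and p = 4. Then |τ̄² + e^{−2πi/p}·τ − τ| = √(3 − √7), and this quantity is strictly less than 1. -/
open Real Complex

theorem shimizu_quantity_sigma4 (τ : ℂ) (hτ : τ = (-1 + I * Real.sqrt 7) / 2) :
    ‖(starRingEnd ℂ) τ ^ 2 + Complex.exp (-2 * π * I / 4) * τ - τ‖ =
      Real.sqrt (3 - Real.sqrt 7) ∧
    ‖(starRingEnd ℂ) τ ^ 2 + Complex.exp (-2 * π * I / 4) * τ - τ‖ < 1 := by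
  have h7 : (Real.sqrt 7 : ℝ) ^ 2 = 7 := Real.sq_sqrt (by norm_num)
  have h7nn : (0:ℝ) ≤ Real.sqrt 7 := Real.sqrt_nonneg 7
  have h7lt : (2:ℝ) < Real.sqrt 7 := by nlinarith
  have hexp : Complex.exp (-2 * π * I / 4) = -I := by
    have h1 : (-2 * (π:ℂ) * I / 4) = ((-(π/2) : ℝ) : ℂ) * I := by push_cast; ring
    rw [h1, Complex.exp_mul_I]
    push_cast
    rw [Complex.cos_neg, Complex.sin_neg]
    rw [show ((π:ℂ)/2) = ((π/2 : ℝ) : ℂ) by push_cast; ring]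
    rw [← Complex.ofReal_cos, ← Complex.ofReal_sin,
        Real.cos_pi_div_two, Real.sin_pi_div_two]
    push_cast; ring
  have hz : (starRingEnd ℂ) τ ^ 2 + Complex.exp (-2 * π * I / 4) * τ - τ =
      (((Real.sqrt 7 - 2) / 2 : ℝ) : ℂ) + ((1/2 : ℝ) : ℂ) * I := by
    rw [hexp, hτ]
    simp only [map_div₀, map_add, map_mul, map_neg, map_one, map_ofNat,
      Complex.conj_I, Complex.conj_ofReal]
    have hI : (I:ℂ)^2 = -1 := Complex.I_sq
    have h2 : ((Real.sqrt 7 : ℝ) : ℂ)^2 = 7 := by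
      rw [show ((Real.sqrt 7 : ℝ):ℂ)^2 = (((Real.sqrt 7)^2 : ℝ) : ℂ) by push_cast; ring, h7]
      norm_num
    push_cast
    linear_combination (((Real.sqrt 7:ℝ):ℂ)^2/4 - ((Real.sqrt 7:ℝ):ℂ)/2) * hI - (1/4) * h2
  rw [hz]
  have habs : ‖(((Real.sqrt 7 - 2) / 2 : ℝ) : ℂ) + ((1/2 : ℝ) : ℂ) * I‖ =
      Real.sqrt (3 - Real.sqrt 7) := by
    rw [Complex.norm_def, Complex.normSq_add_mul_I]
    congr 1
    nlinarith
  refine ⟨habs, ?_⟩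
  rw [habs]
  have : Real.sqrt (3 - Real.sqrt 7) < Real.sqrt 1 := by
    apply Real.sqrt_lt_sqrt (by nlinarith) (by nlinarith)
  simpa using this
end

section
/- Let τ = exp(−2πi/9) + exp(iπ/9)·2cos(2π/5) and p = 4. Then |τ̄² + e^{−2πi/4}·τ − τ|² = (7 + √5 − 3√3 − √15)/2, and this quantity is strictly less than 1. -/
open Real Complex

theorem shimizu_quantity_sigma5bar (τ : ℂ)
    (hτ : τ = Complex.exp (-2 * π * I / 9) +
      Complex.exp (I * π / 9) * (2 * Real.cos (2 * π / 5))) :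
    ‖(starRingEnd ℂ) τ ^ 2 + Complex.exp (-2 * π * I / 4) * τ - τ‖ ^ 2 =
      (7 + Real.sqrt 5 - 3 * Real.sqrt 3 - Real.sqrt 15) / 2 ∧
    ‖(starRingEnd ℂ) τ ^ 2 + Complex.exp (-2 * π * I / 4) * τ - τ‖ ^ 2 < 1 := by
  have h3r : Real.sqrt 3 ^ 2 = 3 := Real.sq_sqrt (by norm_num)
  have h5r : Real.sqrt 5 ^ 2 = 5 := Real.sq_sqrt (by norm_num)
  have h15r : Real.sqrt 15 ^ 2 = 15 := Real.sq_sqrt (by norm_num)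
  have h35r : Real.sqrt 3 * Real.sqrt 5 = Real.sqrt 15 := by
    rw [← Real.sqrt_mul (by norm_num : (0:ℝ) ≤ 3)]; norm_num
  have h3c : ((Real.sqrt 3 : ℝ) : ℂ) ^ 2 = 3 := by exact_mod_cast congrArg (Complex.ofReal) h3r
  have h5c : ((Real.sqrt 5 : ℝ) : ℂ) ^ 2 = 5 := by exact_mod_cast congrArg (Complex.ofReal) h5r
  have h35c : ((Real.sqrt 3 : ℝ) : ℂ) * ((Real.sqrt 5 : ℝ) : ℂ) = ((Real.sqrt 15 : ℝ) : ℂ) := by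
    exact_mod_cast congrArg (Complex.ofReal) h35r
  have hlt : (7 + Real.sqrt 5 - 3 * Real.sqrt 3 - Real.sqrt 15) / 2 < 1 := by
    have b3 : (1.7:ℝ) < Real.sqrt 3 := by nlinarith [Real.sqrt_nonneg 3]
    have b5 : Real.sqrt 5 < 2.3 := by nlinarith [Real.sqrt_nonneg 5]
    have b15 : (3.8:ℝ) < Real.sqrt 15 := by nlinarith [Real.sqrt_nonneg 15]
    linarith
  have hcr : Real.cos (2 * π / 5) = (Real.sqrt 5 - 1) / 4 := by
    have hp : (2:ℝ) * π / 5 = 2 * (π / 5) := by ring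
    rw [hp, Real.cos_two_mul, Real.cos_pi_div_five]
    linear_combination h5r / 8
  have hcosC : (2 : ℂ) * ((Real.cos (2 * π / 5) : ℝ) : ℂ) = (((Real.sqrt 5 : ℝ) : ℂ) - 1) / 2 := by
    rw [hcr]; push_cast; ring
  have hmi : Complex.exp (-2 * (π:ℂ) * I / 4) = -I := by
    have harg : (-2 * (π:ℂ) * I / 4) = ((-(π/2) : ℝ) : ℂ) * I := by push_cast; ring
    rw [harg, Complex.exp_mul_I, ← Complex.ofReal_cos, ← Complex.ofReal_sin,
      Real.cos_neg, Real.sin_neg, Real.cos_pi_div_two, Real.sin_pi_div_two]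
    push_cast; ring
  have heq : ‖(starRingEnd ℂ) τ ^ 2 + Complex.exp (-2 * π * I / 4) * τ - τ‖ ^ 2 =
      (7 + Real.sqrt 5 - 3 * Real.sqrt 3 - Real.sqrt 15) / 2 := by
    rw [Complex.sq_norm, ← Complex.ofReal_inj, ← Complex.mul_conj]
    rw [hτ, hmi, hcosC]
    set u : ℂ := Complex.exp (I * π / 9) with hu
    set v : ℂ := Complex.exp (-(I * (π:ℂ) / 9)) with hv
    have huv : u * v = 1 := by
      rw [hu, hv, ← Complex.exp_add, add_neg_cancel, Complex.exp_zero]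
    have hexp2 : Complex.exp (-2 * (π:ℂ) * I / 9) = v ^ 2 := by
      rw [hv, ← Complex.exp_nat_mul]; congr 1; push_cast; ring
    have hconju : (starRingEnd ℂ) u = v := by
      rw [hu, hv, ← Complex.exp_conj]; congr 1
      simp only [map_div₀, Complex.conj_I, Complex.conj_ofReal, map_ofNat, map_mul, map_neg]
      ring
    have hconjv : (starRingEnd ℂ) v = u := by
      rw [hu, hv, ← Complex.exp_conj]; congr 1
      simp only [map_div₀, Complex.conj_I, Complex.conj_ofReal, map_ofNat, map_mul, map_neg]
      ring
    have hu3 : u ^ 3 = (1 + ((Real.sqrt 3 : ℝ) : ℂ) * I) / 2 := by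
      have h1 : u ^ 3 = Complex.exp (((π/3 : ℝ) : ℂ) * I) := by
        rw [hu, ← Complex.exp_nat_mul]; congr 1; push_cast; ring
      rw [h1, Complex.exp_mul_I, ← Complex.ofReal_cos, ← Complex.ofReal_sin,
        Real.cos_pi_div_three, Real.sin_pi_div_three]
      push_cast; ring
    have hv3 : v ^ 3 = (1 - ((Real.sqrt 3 : ℝ) : ℂ) * I) / 2 := by
      have h1 : v ^ 3 = Complex.exp (((-(π/3) : ℝ) : ℂ) * I) := by
        rw [hv, ← Complex.exp_nat_mul]; congr 1; push_cast; ring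
      rw [h1, Complex.exp_mul_I, ← Complex.ofReal_cos, ← Complex.ofReal_sin,
        Real.cos_neg, Real.sin_neg, Real.cos_pi_div_three, Real.sin_pi_div_three]
      push_cast; ring
    rw [hexp2]
    simp only [map_add, map_sub, map_mul, map_pow, map_div₀, map_one, map_ofNat, map_neg,
      Complex.conj_I, Complex.conj_ofReal, hconju, hconjv]
    push_cast
    linear_combination
      ((29/16 : ℂ) + (1/4 : ℂ)*(Real.sqrt 5 : ℂ) + (1/8 : ℂ)*(Real.sqrt 5 : ℂ)^2 + (-1/4 : ℂ)*(Real.sqrt 5 : ℂ)^3 + (1/16 : ℂ)*(Real.sqrt 5 : ℂ)^4 + (-5/4 : ℂ)*I^2 + (1/2 : ℂ)*I^2*(Real.sqrt 5 : ℂ) + (-1/4 : ℂ)*I^2*(Real.sqrt 5 : ℂ)^2 + (1/4 : ℂ)*v^3 + (1/4 : ℂ)*v^3*(Real.sqrt 5 : ℂ) + (-3/4 : ℂ)*v^3*(Real.sqrt 5 : ℂ)^2 + (1/4 : ℂ)*v^3*(Real.sqrt 5 : ℂ)^3 + (3/2 : ℂ)*v^3*I + (-3/2 : ℂ)*v^3*I*(Real.sqrt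 5 : ℂ) + (25/16 : ℂ)*u*v + (3/4 : ℂ)*u*v*(Real.sqrt 5 : ℂ) + (-1/8 : ℂ)*u*v*(Real.sqrt 5 : ℂ)^2 + (-1/4 : ℂ)*u*v*(Real.sqrt 5 : ℂ)^3 + (1/16 : ℂ)*u*v*(Real.sqrt 5 : ℂ)^4 + (-1 : ℂ)*u*v*I^2 + (-1 : ℂ)*u*v^4 + (1 : ℂ)*u*v^4*(Real.sqrt 5 : ℂ) + (2 : ℂ)*u^2*v^2 + (-2 : ℂ)*u^2*v^2*(Real.sqrt 5 : ℂ) + (1 : ℂ)*u^2*v^2*(Real.sqrt 5 : ℂ)^2 + (1/4 : ℂ)*u^3 + (1/4 : ℂ)*u^3*(Real.sqrt 5 : ℂ) + (-3/4 : ℂ)*u^3*(Real.sqrt 5 : ℂ)^2 + (1/4 : ℂ)*u^3*(Real.sqrt 5 : ℂ)^3 + (-3/2 : ℂ)*u^3*I + (3/2 : ℂ)*u^3*I*(Real.sqrt 5 : ℂ) + (1 : ℂ)*u^3*v^3 + (-1 : ℂ)*u^4*v + (1 : ℂ)*u^4*v*(Real.sqrt 5 : ℂ)) * huv +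
      ((-1/2 : ℂ) + (1/8 : ℂ)*(Real.sqrt 5 : ℂ) + (-1/4 : ℂ)*(Real.sqrt 5 : ℂ)^2 + (1/8 : ℂ)*(Real.sqrt 5 : ℂ)^3 + (-7/8 : ℂ)*I + (9/8 : ℂ)*I*(Real.sqrt 5 : ℂ) + (3/8 : ℂ)*I*(Real.sqrt 5 : ℂ)^2 + (-1/8 : ℂ)*I*(Real.sqrt 5 : ℂ)^3 + (-3/8 : ℂ)*I*(Real.sqrt 3 : ℂ) + (-1/4 : ℂ)*I*(Real.sqrt 3 : ℂ)*(Real.sqrt 5 : ℂ) + (1/8 : ℂ)*I*(Real.sqrt 3 : ℂ)*(Real.sqrt 5 : ℂ)^2 + (1/2 : ℂ)*I^2 + (-1/2 : ℂ)*I^2*(Real.sqrt 5 : ℂ) + (1/2 : ℂ)*I^2*(Real.sqrt 3 : ℂ) + (-3/4 : ℂ)*u^3 + (-1/2 : ℂ)*u^3*(Real.sqrt 5 : ℂ) + (1/4 : ℂ)*u^3*(Real.sqrt 5 : ℂ)^2 + (1 : ℂ)*u^3*I) * hu3 +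
      ((-1/2 : ℂ) + (1/8 : ℂ)*(Real.sqrt 5 : ℂ) + (-1/4 : ℂ)*(Real.sqrt 5 : ℂ)^2 + (1/8 : ℂ)*(Real.sqrt 5 : ℂ)^3 + (7/8 : ℂ)*I + (-9/8 : ℂ)*I*(Real.sqrt 5 : ℂ) + (-3/8 : ℂ)*I*(Real.sqrt 5 : ℂ)^2 + (1/8 : ℂ)*I*(Real.sqrt 5 : ℂ)^3 + (3/8 : ℂ)*I*(Real.sqrt 3 : ℂ) + (1/4 : ℂ)*I*(Real.sqrt 3 : ℂ)*(Real.sqrt 5 : ℂ) + (-1/8 : ℂ)*I*(Real.sqrt 3 : ℂ)*(Real.sqrt 5 : ℂ)^2 + (1/2 : ℂ)*I^2 + (-1/2 : ℂ)*I^2*(Real.sqrt 5 : ℂ) + (1/2 : ℂ)*I^2*(Real.sqrt 3 : ℂ) + (-3/4 : ℂ)*v^3 + (-1/2 : ℂ)*v^3*(Real.sqrt 5 : ℂ) + (1/4 : ℂ)*v^3*(Real.sqrt 5 : ℂ)^2 + (-1 : ℂ)*v^3*I) * hv3 +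
      ((-3/4 : ℂ) + (-1/4 : ℂ)*(Real.sqrt 5 : ℂ)^2 + (-3/8 : ℂ)*(Real.sqrt 3 : ℂ) + (9/8 : ℂ)*(Real.sqrt 3 : ℂ)*(Real.sqrt 5 : ℂ) + (3/8 : ℂ)*(Real.sqrt 3 : ℂ)*(Real.sqrt 5 : ℂ)^2 + (-1/8 : ℂ)*(Real.sqrt 3 : ℂ)*(Real.sqrt 5 : ℂ)^3 + (-3/8 : ℂ)*(Real.sqrt 3 : ℂ)^2 + (-1/4 : ℂ)*(Real.sqrt 3 : ℂ)^2*(Real.sqrt 5 : ℂ) + (1/8 : ℂ)*(Real.sqrt 3 : ℂ)^2*(Real.sqrt 5 : ℂ)^2) * Complex.I_sq +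
      ((3/8 : ℂ) + (1/4 : ℂ)*(Real.sqrt 5 : ℂ) + (-1/8 : ℂ)*(Real.sqrt 5 : ℂ)^2) * h3c +
      ((1/16 : ℂ) + (-1/8 : ℂ)*(Real.sqrt 5 : ℂ) + (1/16 : ℂ)*(Real.sqrt 5 : ℂ)^2 + (-3/8 : ℂ)*(Real.sqrt 3 : ℂ) + (1/8 : ℂ)*(Real.sqrt 3 : ℂ)*(Real.sqrt 5 : ℂ)) * h5c +
      ((-1/2 : ℂ)) * h35c
  exact ⟨heq, heq ▸ hlt⟩
end

section
/- With J, R₁, and H_τ as defined (J the cyclic permutation matrix; R₁ the upper-triangular matrix with diagonal (e^{2iψ/3}, e^{−iψ/3}, e^{−iψ/3}) and first row (e^{2iψ/3}, τ, −e^{iψ/3}·conj(τ)); H_τ the circulant-type Hermitian matrix with diagonal 2sin(ψ/2) and off-diagonal entries ±i·e^{∓iψ/6}·τ or conj(τ) as specified), we have R₁ᴴ H_τ R₁ = H_τ. -/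
set_option maxHeartbeats 1000000


open Real Complex Matrix

theorem R1_preserves_Htau (ψ : ℝ) (τ : ℂ)
    (R₁ Hτ : Matrix (Fin 3) (Fin 3) ℂ)
    (hR : R₁ = Matrix.of
      ![![Complex.exp (2 * I * ψ / 3), τ, -Complex.exp (I * ψ / 3) * (starRingEnd ℂ) τ],
        ![0, Complex.exp (-I * ψ / 3), 0],
        ![0, 0, Complex.exp (-I * ψ / 3)]])
    (hH : Hτ = Matrix.of
      ![![(2 * Real.sin (ψ / 2) : ℂ), -I * Complex.exp (-I * ψ / 6) * τ,
          I * Complex.exp (I * ψ / 6) * (starRingEnd ℂ) τ],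
        ![I * Complex.exp (I * ψ / 6) * (starRingEnd ℂ) τ, (2 * Real.sin (ψ / 2) : ℂ),
          -I * Complex.exp (-I * ψ / 6) * τ],
        ![-I * Complex.exp (-I * ψ / 6) * τ, I * Complex.exp (I * ψ / 6) * (starRingEnd ℂ) τ,
          (2 * Real.sin (ψ / 2) : ℂ)]]) :
    R₁ᴴ * Hτ * R₁ = Hτ := by
  subst hR hH
  set e : ℂ := Complex.exp (I * ψ / 6) with he_def
  have he : e ≠ 0 := Complex.exp_ne_zero _
  have hpow : ∀ n : ℕ, Complex.exp (n * (I * ψ / 6)) = e ^ n := fun n =>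
    Complex.exp_nat_mul _ n
  have h4 : Complex.exp (2 * I * ψ / 3) = e ^ 4 := by
    rw [← hpow 4]; ring_nf
  have h2 : Complex.exp (I * ψ / 3) = e ^ 2 := by
    rw [← hpow 2]; ring_nf
  have h2' : Complex.exp (-I * ψ / 3) = (e ^ 2)⁻¹ := by
    rw [← h2, ← Complex.exp_neg]; ring_nf
  have h1' : Complex.exp (-I * ψ / 6) = e⁻¹ := by
    rw [he_def, ← Complex.exp_neg]; ring_nf
  have key : ∀ c : ℂ, (starRingEnd ℂ) c = -c →
      (starRingEnd ℂ) (Complex.exp c) = (Complex.exp c)⁻¹ := fun c h => by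
    rw [← Complex.exp_conj, h, Complex.exp_neg]
  have hc4 : (starRingEnd ℂ) (Complex.exp (2 * I * ψ / 3)) = (e ^ 4)⁻¹ := by
    rw [key _ (by simp [map_div₀, Complex.conj_ofReal, map_ofNat]; ring), h4]
  have hc2 : (starRingEnd ℂ) (Complex.exp (I * ψ / 3)) = (e ^ 2)⁻¹ := by
    rw [key _ (by simp [map_div₀, Complex.conj_ofReal, map_ofNat]; ring), h2]
  have hc2' : (starRingEnd ℂ) (Complex.exp (-I * ψ / 3)) = e ^ 2 := by
    rw [key _ (by simp [map_div₀, Complex.conj_ofReal, map_ofNat]; ring), h2', inv_inv]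
  have hsin : (2 * Real.sin (ψ / 2) : ℂ) = -I * e ^ 3 + I * (e ^ 3)⁻¹ := by
    have h3 : Complex.exp ((ψ:ℂ)/2 * I) = e ^ 3 := by
      rw [← hpow 3]; ring_nf
    have h3' : Complex.exp (-((ψ:ℂ)/2) * I) = (e ^ 3)⁻¹ := by
      rw [← h3, ← Complex.exp_neg]; ring_nf
    push_cast
    rw [Complex.sin, h3]
    rw [show -(↑ψ / 2 : ℂ) * I = -((ψ:ℂ)/2) * I by ring, h3']
    field_simp
    ring
  have hce : (starRingEnd ℂ) e = e⁻¹ := by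
    rw [he_def, key _ (by simp [map_div₀, Complex.conj_ofReal, map_ofNat]; ring)]
  have hfin2 : (⟨2, by omega⟩ : Fin 3) = (2 : Fin 3) := rfl
  ext i j
  fin_cases i <;> fin_cases j <;>
    simp only [Matrix.mul_apply, Fin.sum_univ_three, Matrix.conjTranspose_apply,
      Matrix.of_apply, Matrix.cons_val', Matrix.cons_val_zero, Matrix.cons_val_one,
      Matrix.head_cons, Matrix.head_fin_const, Matrix.empty_val', Matrix.cons_val_fin_one,
      Complex.star_def, _root_.map_mul, map_neg, Complex.conj_conj, Complex.conj_I,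
      Matrix.vecHead, Matrix.vecTail, Matrix.cons_val_two, map_pow,
      Fin.mk_zero, Fin.mk_one, hfin2, Function.comp_apply, Function.comp,
      Matrix.cons_val_succ, map_inv₀,
      map_zero, hc4, hc2, hc2', h4, h2, h2', h1', hce, hsin] <;>
  · field_simp
    try rw [div_eq_iff (by simp [mul_ne_zero_iff, pow_ne_zero_iff, he])]
    ring
end

section
/- Let ψ = 2π/p and let R₁, J be the standard generators, with R₂ = J R₁ J⁻¹. Then the matrix R₁R₂ equals the matrix with rows (e^{2iπ/3p}(1−|τ|²), e^{4iπ/3p}τ, τ²−conj(τ)), (−conj(τ), e^{2iπ/3p}, e^{−2iπ/3p}τ), (0, 0, e^{−4iπ/3p}), and its characteristic polynomial has roots −e^{2iπ/3p+riπ/s}, −e^{2iπ/3p−riπ/s}, e^{−4iπ/3p} whenever |τ|² = 2 + 2cos(rπ/s). -/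
open Real Complex Matrix Polynomial

theorem R1R2_matrix_and_charpoly (p : ℕ) (hp : 0 < p) (τ : ℂ) (r s : ℕ) (hs : 0 < s)
    (ψ : ℝ) (hψ : ψ = 2 * π / p)
    (J R₁ R₂ : Matrix (Fin 3) (Fin 3) ℂ)
    (hJ : J = Matrix.of ![![0, 0, 1], ![1, 0, 0], ![0, 1, 0]])
    (hR : R₁ = Matrix.of
      ![![Complex.exp (2 * I * ψ / 3), τ, -Complex.exp (I * ψ / 3) * (starRingEnd ℂ) τ],
        ![0, Complex.exp (-I * ψ / 3), 0],
        ![0, 0, Complex.exp (-I * ψ / 3)]])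
    (hR2 : R₂ = J * R₁ * J⁻¹) :
    R₁ * R₂ = Matrix.of
      ![![Complex.exp (2 * π * I / (3 * p)) * (1 - ‖τ‖ ^ 2),
          Complex.exp (4 * π * I / (3 * p)) * τ, τ ^ 2 - (starRingEnd ℂ) τ],
        ![-(starRingEnd ℂ) τ, Complex.exp (2 * π * I / (3 * p)),
          Complex.exp (-2 * π * I / (3 * p)) * τ],
        ![0, 0, Complex.exp (-4 * π * I / (3 * p))]] ∧
    (‖τ‖ ^ 2 = 2 + 2 * Real.cos (r * π / s) →
      (R₁ * R₂).charpoly =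
        (X - C (-Complex.exp (2 * π * I / (3 * p) + r * π * I / s))) *
        (X - C (-Complex.exp (2 * π * I / (3 * p) - r * π * I / s))) *
        (X - C (Complex.exp (-4 * π * I / (3 * p))))) := by
  have hp' : (p : ℂ) ≠ 0 := Nat.cast_ne_zero.mpr hp.ne'
  have hψc : (ψ : ℂ) = 2 * π / p := by rw [hψ]; push_cast; ring
  have hJinv : J⁻¹ = Matrix.of ![![0, 1, 0], ![0, 0, 1], ![1, 0, 0]] := by
    rw [hJ]
    apply inv_eq_right_inv
    ext i j
    fin_cases i <;> fin_cases j <;>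
      simp [Matrix.mul_apply, Fin.sum_univ_three, Matrix.one_apply, Matrix.vecHead,
        Matrix.vecTail]
  have e1 : Complex.exp (2 * I * ψ / 3) = Complex.exp (4 * π * I / (3 * p)) := by
    rw [hψc]; congr 1; field_simp; ring
  have e2 : Complex.exp (I * ψ / 3) = Complex.exp (2 * π * I / (3 * p)) := by
    rw [hψc]; congr 1; field_simp
  have e3 : Complex.exp (-I * ψ / 3) = Complex.exp (-(2 * π * I) / (3 * p)) := by
    rw [hψc]; congr 1; field_simp
  set c := Complex.exp (2 * π * I / (3 * p)) with hc
  set b := Complex.exp (-(2 * π * I) / (3 * p)) with hb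
  have hcb : c * b = 1 := by
    rw [hc, hb, ← Complex.exp_add,
      show 2 * (π:ℂ) * I / (3 * p) + -(2 * π * I) / (3 * p) = 0 by ring, Complex.exp_zero]
  have hA : Complex.exp (4 * π * I / (3 * p)) = c * c := by
    rw [hc, ← Complex.exp_add]; congr 1; ring
  have hB : Complex.exp (-4 * π * I / (3 * p)) = b * b := by
    rw [hb, ← Complex.exp_add]; congr 1; ring
  have hB2 : Complex.exp (-2 * π * I / (3 * p)) = b := by
    rw [hb]; congr 1; ring
  clear_value c b
  have habs : ((‖τ‖ : ℂ)) ^ 2 = τ * (starRingEnd ℂ) τ := by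
    rw [← Complex.ofReal_pow, Complex.sq_norm, Complex.mul_conj]
  have hM : R₁ * R₂ = Matrix.of
      ![![c * (1 - (‖τ‖ : ℂ) ^ 2), c * c * τ, τ ^ 2 - (starRingEnd ℂ) τ],
        ![-(starRingEnd ℂ) τ, c, b * τ],
        ![0, 0, b * b]] := by
    rw [hR2, hJinv, hR, hJ, e1, e2, e3, hA]
    ext i j
    fin_cases i <;> fin_cases j <;>
      simp [Matrix.mul_apply, Fin.sum_univ_three, Matrix.vecHead, Matrix.vecTail] <;>
      (try simp only [habs]) <;>
      first
        | ring1
        | linear_combination c * hcb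
        | linear_combination (-c) * hcb
        | linear_combination ((starRingEnd ℂ) τ) * hcb
        | linear_combination (-(starRingEnd ℂ) τ) * hcb
        | linear_combination (c * τ) * hcb
  refine ⟨?_, fun h => ?_⟩
  · rw [hM, hA, hB, hB2]
  set d := Complex.exp ((r : ℂ) * π * I / s) with hd
  set e := Complex.exp (-((r : ℂ) * π * I / s)) with he
  have hde : d * e = 1 := by
    rw [hd, he, ← Complex.exp_add, add_neg_cancel, Complex.exp_zero]
  have h1 : Complex.exp (2 * π * I / (3 * p) + r * π * I / s) = c * d := by
    rw [Complex.exp_add, ← hc, ← hd]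
  have h2 : Complex.exp (2 * π * I / (3 * p) - r * π * I / s) = c * e := by
    rw [sub_eq_add_neg, Complex.exp_add, ← hc, ← he]
  have hcosθ : ((Real.cos ((r : ℝ) * π / s) : ℂ)) = (d + e) / 2 := by
    have harg : ((((r : ℝ) * π / s : ℝ)) : ℂ) * I = (r : ℂ) * π * I / s := by
      push_cast; ring
    have harg2 : (-(((r : ℝ) * π / s : ℝ) : ℂ)) * I = -((r : ℂ) * π * I / s) := by
      push_cast; ring
    rw [Complex.ofReal_cos, Complex.cos, harg, harg2, ← hd, ← he]
  clear_value d e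
  have hsum : τ * (starRingEnd ℂ) τ = 2 + (d + e) := by
    have h' := congrArg (fun x : ℝ => (x : ℂ)) h
    simp only [Complex.ofReal_add, Complex.ofReal_mul, Complex.ofReal_pow,
      Complex.ofReal_ofNat] at h'
    rw [← habs, h', hcosθ]; ring
  rw [hM, h1, h2, hB, Matrix.charpoly, Matrix.det_fin_three]
  apply Polynomial.funext
  intro z
  simp [charmatrix_apply, Matrix.diagonal_apply, Matrix.vecHead, Matrix.vecTail, habs]
  linear_combination (z - b * b) * c * z * hsum - (z - b * b) * c * c * hde
end

section
/- Suppose |τ|² = 2 and ψ = 2π/p. With R₁, J the standard generators and R₂ = JR₁J⁻¹, the matrix (R₁R₂)² is upper triangular with diagonal (−e^{4iπ/3p}, −e^{4iπ/3p}, e^{−8iπ/3p}); in particular it has a repeated eigenvalue −e^{4iπ/3p} and the ratio of the third eigenvalue to the repeated one is −e^{−4iπ/p} = e^{i(p−4)π/p}. -/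
open Real Complex Matrix

theorem R1R2_sq_upper_triangular (p : ℕ) (hp : 0 < p) (τ : ℂ)
    (hτ : ‖τ‖ ^ 2 = 2)
    (ψ : ℝ) (hψ : ψ = 2 * π / p)
    (J R₁ R₂ : Matrix (Fin 3) (Fin 3) ℂ)
    (hJ : J = Matrix.of ![![0, 0, 1], ![1, 0, 0], ![0, 1, 0]])
    (hR : R₁ = Matrix.of
      ![![Complex.exp (2 * I * ψ / 3), τ, -Complex.exp (I * ψ / 3) * (starRingEnd ℂ) τ],
        ![0, Complex.exp (-I * ψ / 3), 0],
        ![0, 0, Complex.exp (-I * ψ / 3)]])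
    (hR2 : R₂ = J * R₁ * J⁻¹) :
    ((R₁ * R₂) ^ 2) 1 0 = 0 ∧ ((R₁ * R₂) ^ 2) 2 0 = 0 ∧ ((R₁ * R₂) ^ 2) 2 1 = 0 ∧
    ((R₁ * R₂) ^ 2) 0 0 = -Complex.exp (4 * π * I / (3 * p)) ∧
    ((R₁ * R₂) ^ 2) 1 1 = -Complex.exp (4 * π * I / (3 * p)) ∧
    ((R₁ * R₂) ^ 2) 2 2 = Complex.exp (-8 * π * I / (3 * p)) ∧
    ((R₁ * R₂) ^ 2) 2 2 / ((R₁ * R₂) ^ 2) 0 0 = -Complex.exp (-4 * π * I / p) ∧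
    -Complex.exp (-4 * π * I / p) = Complex.exp (I * (((p : ℂ) - 4) * π / p)) := by
  have hp' : (p : ℂ) ≠ 0 := Nat.cast_ne_zero.mpr hp.ne'
  have hτ' : τ * (starRingEnd ℂ) τ = 2 := by
    rw [Complex.mul_conj]
    rw [← Complex.sq_norm] at *
    norm_cast
  subst hψ hR2 hJ hR
  have hJinv : (Matrix.of ![![(0:ℂ), 0, 1], ![1, 0, 0], ![0, 1, 0]])⁻¹
      = Matrix.of ![![0, 1, 0], ![0, 0, 1], ![1, 0, 0]] := by
    apply Matrix.inv_eq_left_inv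
    ext i j
    fin_cases i <;> fin_cases j <;>
      simp [Matrix.mul_apply, Fin.sum_univ_three, Matrix.one_apply, Matrix.vecHead, Matrix.vecTail]
  set t : ℂ := I * ((2 * π / p : ℝ) : ℂ) / 3 with ht
  have hc : Complex.exp t ≠ 0 := Complex.exp_ne_zero t
  have hπ : ((2 * π / p : ℝ) : ℂ) = 2 * (π : ℂ) / p := by push_cast; ring
  have e1 : Complex.exp (2 * I * ((2 * π / p : ℝ) : ℂ) / 3) = Complex.exp t * Complex.exp t := by
    rw [← Complex.exp_add]; congr 1; rw [ht]; ring
  have e2 : Complex.exp (-I * ((2 * π / p : ℝ) : ℂ) / 3) = (Complex.exp t)⁻¹ := by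
    rw [← Complex.exp_neg]; congr 1; rw [ht]; ring
  have e3 : Complex.exp (4 * (π : ℂ) * I / (3 * p)) = Complex.exp t * Complex.exp t := by
    rw [← Complex.exp_add]; congr 1; rw [ht, hπ]; ring
  have e4 : Complex.exp (-8 * (π : ℂ) * I / (3 * p)) = (Complex.exp t ^ 4)⁻¹ := by
    rw [show (-8 * (π : ℂ) * I / (3 * p)) = -(((4:ℕ):ℂ) * t) from by rw [ht, hπ]; push_cast; ring,
      Complex.exp_neg, Complex.exp_nat_mul]
  have e5 : Complex.exp (-4 * (π : ℂ) * I / (p : ℂ)) = (Complex.exp t ^ 6)⁻¹ := by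
    rw [show (-4 * (π : ℂ) * I / (p : ℂ)) = -(((6:ℕ):ℂ) * t) from by rw [ht, hπ]; push_cast; ring,
      Complex.exp_neg, Complex.exp_nat_mul]
  refine ⟨?_, ?_, ?_, ?_, ?_, ?_, ?_, ?_⟩
  · simp only [e1, e2, e3, e4, e5]
    rw [pow_two, hJinv]
    simp [Matrix.mul_apply, Fin.sum_univ_three, Matrix.vecHead, Matrix.vecTail]
    linear_combination Complex.exp t * (starRingEnd ℂ) τ * hτ'
  · simp only [e1, e2, e3, e4, e5]
    rw [pow_two, hJinv]
    simp [Matrix.mul_apply, Fin.sum_univ_three, Matrix.vecHead, Matrix.vecTail]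
  · simp only [e1, e2, e3, e4, e5]
    rw [pow_two, hJinv]
    simp [Matrix.mul_apply, Fin.sum_univ_three, Matrix.vecHead, Matrix.vecTail]
  · simp only [e1, e2, e3, e4, e5]
    rw [pow_two, hJinv]
    simp [Matrix.mul_apply, Fin.sum_univ_three, Matrix.vecHead, Matrix.vecTail]
    linear_combination (Complex.exp t * Complex.exp t * ((starRingEnd ℂ) τ * τ - 1)) * hτ'
  · simp only [e1, e2, e3, e4, e5]
    rw [pow_two, hJinv]
    simp [Matrix.mul_apply, Fin.sum_univ_three, Matrix.vecHead, Matrix.vecTail]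
    linear_combination (-(Complex.exp t * Complex.exp t)) * hτ'
  · simp only [e1, e2, e3, e4, e5]
    rw [pow_two, hJinv]
    simp [Matrix.mul_apply, Fin.sum_univ_three, Matrix.vecHead, Matrix.vecTail]
    field_simp
  · simp only [e1, e2, e3, e4, e5]
    rw [pow_two, hJinv]
    simp [Matrix.mul_apply, Fin.sum_univ_three, Matrix.vecHead, Matrix.vecTail]
    have hd : (Complex.exp t + -(τ * (Complex.exp t * (starRingEnd ℂ) τ))) * (Complex.exp t + -(τ * (Complex.exp t * (starRingEnd ℂ) τ))) + -(τ * (Complex.exp t * Complex.exp t) * (starRingEnd ℂ) τ) = -(Complex.exp t * Complex.exp t) := by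
      linear_combination (Complex.exp t * Complex.exp t * ((starRingEnd ℂ) τ * τ - 1)) * hτ'
    rw [hd]
    field_simp
  · rw [e5, show I * (((p : ℂ) - 4) * π / p) = (π * I) + -(((6:ℕ):ℂ) * t) from by
      rw [ht, hπ]; push_cast; field_simp; ring,
      Complex.exp_add, Complex.exp_pi_mul_I, Complex.exp_neg, Complex.exp_nat_mul]
    ring
end

section
/- Let τ = e^{iπ/3} + e^{−iπ/6}·√2 (so |τ|² = 3), let p ≥ 21 be divisible by 3, and set cosh²(δ_p) = |conj(τ)² + e^{−2πi/p}τ − τ|² / (2cos(2π/p) + 1)². Then cosh(δ_p)·sin(3π/p) < 1/2. -/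
open Real Complex

private lemma key_poly (r2 r3 c s : ℝ) (h2 : r2 ^ 2 = 2) (h3 : r3 ^ 2 = 3)
    (hcs : c ^ 2 + s ^ 2 = 1) :
    ((((1 + r2 * r3) / 2) ^ 2 - ((r3 - r2) / 2) ^ 2 +
        (c * ((1 + r2 * r3) / 2) + s * ((r3 - r2) / 2)) - (1 + r2 * r3) / 2) ^ 2 +
      (-(2 * ((1 + r2 * r3) / 2) * ((r3 - r2) / 2)) +
        (c * ((r3 - r2) / 2) - s * ((1 + r2 * r3) / 2)) - (r3 - r2) / 2) ^ 2) =
      5 + 4 * c + 2 * r2 * s := by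
  linear_combination (3 : ℝ) * hcs +
    (5/4 + 1/4*s^2 - 5/4*c + 1/4*c^2 - 9/4*r3*s - 3/2*r3^2 + 1/4*r3^2*s^2 + 7/4*r3^2*c
      + 1/4*r3^2*c^2 + 3/4*r3^3*s + 1/4*r3^4 + 1/4*r2*s + 3/4*r2*r3 - 3/4*r2*r3*c
      - 3/4*r2*r3^2*s - 1/4*r2*r3^3 + 1/4*r2*r3^3*c + 1/16*r2^2 + 1/8*r2^2*r3^2
      + 1/16*r2^2*r3^4) * h2 +
    (-3/16 + 3/4*s^2 + 9/4*c + 3/4*c^2 + 5/4*r3*s + 9/16*r3^2 + 3/4*r2*s + 1/4*r2*r3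
      - 1/4*r2*r3*c) * h3

set_option maxHeartbeats 1600000 in
theorem jorgensen_sigma1_multiples_of_3 (τ : ℂ)
    (hτ : τ = Complex.exp (I * π / 3) + Complex.exp (-I * π / 6) * (Real.sqrt 2 : ℂ))
    (p : ℕ) (hp : 21 ≤ p) (h3 : 3 ∣ p) (δ : ℝ)
    (hδ : Real.cosh δ ^ 2 =
      ‖(starRingEnd ℂ) τ ^ 2 + Complex.exp (-2 * π * I / p) * τ - τ‖ ^ 2 /
        (2 * Real.cos (2 * π / p) + 1) ^ 2) :
    Real.cosh δ * Real.sin (3 * π / p) < 1 / 2 := by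
  have hpR : (21 : ℝ) ≤ (p : ℝ) := by exact_mod_cast hp
  have hppos : (0 : ℝ) < (p : ℝ) := by linarith
  obtain ⟨θ, hθdef⟩ : ∃ t : ℝ, t = 2 * π / (p : ℝ) := ⟨_, rfl⟩
  rw [show 2 * π / (p : ℝ) = θ from hθdef.symm] at hδ
  have hπ : π < 3.15 := by
    have := Real.pi_lt_d2
    norm_num at this ⊢
    linarith
  have hπ3 : 3 < π := Real.pi_gt_three
  have hπ0 : 0 < π := Real.pi_pos
  have hθ0 : 0 < θ := by rw [hθdef]; positivity
  have hθle : θ ≤ 0.3 := by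
    rw [hθdef, div_le_iff₀ hppos]
    have h21 : (0.3 : ℝ) * 21 ≤ 0.3 * (p : ℝ) := by linarith
    linarith
  obtain ⟨c, hc⟩ : ∃ t : ℝ, t = Real.cos θ := ⟨_, rfl⟩
  obtain ⟨s, hs⟩ : ∃ t : ℝ, t = Real.sin θ := ⟨_, rfl⟩
  rw [← hc] at hδ
  have h2 : Real.sqrt 2 ^ 2 = 2 := Real.sq_sqrt (by norm_num)
  have h3' : Real.sqrt 3 ^ 2 = 3 := Real.sq_sqrt (by norm_num)
  have hcs : c ^ 2 + s ^ 2 = 1 := by rw [hc, hs]; exact Real.cos_sq_add_sin_sq θ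
  -- real and imaginary parts of τ
  have e1 : Complex.exp (I * π / 3) = Complex.exp ((π / 3 : ℝ) * I) := by
    congr 1; push_cast; ring
  have e2 : Complex.exp (-I * π / 6) = Complex.exp ((-(π / 6) : ℝ) * I) := by
    congr 1; push_cast; ring
  have hre1 : (Complex.exp ((π / 3 : ℝ) * I)).re = 1 / 2 := by
    rw [Complex.exp_ofReal_mul_I_re, Real.cos_pi_div_three]
  have him1 : (Complex.exp ((π / 3 : ℝ) * I)).im = Real.sqrt 3 / 2 := by
    rw [Complex.exp_ofReal_mul_I_im, Real.sin_pi_div_three]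
  have hre2 : (Complex.exp ((-(π / 6) : ℝ) * I)).re = Real.sqrt 3 / 2 := by
    rw [Complex.exp_ofReal_mul_I_re, Real.cos_neg, Real.cos_pi_div_six]
  have him2 : (Complex.exp ((-(π / 6) : ℝ) * I)).im = -(1 / 2) := by
    rw [Complex.exp_ofReal_mul_I_im, Real.sin_neg, Real.sin_pi_div_six]
  have hτre : τ.re = (1 + Real.sqrt 2 * Real.sqrt 3) / 2 := by
    rw [hτ, e1, e2]
    simp only [Complex.add_re, Complex.mul_re, Complex.ofReal_re, Complex.ofReal_im,
      hre1, him1, hre2, him2]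
    ring
  have hτim : τ.im = (Real.sqrt 3 - Real.sqrt 2) / 2 := by
    rw [hτ, e1, e2]
    simp only [Complex.add_im, Complex.mul_im, Complex.ofReal_re, Complex.ofReal_im,
      hre1, him1, hre2, him2]
    ring
  -- the rotating exponential
  have hexp : Complex.exp (-2 * ↑π * I / ↑p) = Complex.exp ((-θ : ℝ) * I) := by
    congr 1; rw [hθdef]; push_cast; ring
  have hwre : (Complex.exp ((-θ : ℝ) * I)).re = c := by
    rw [Complex.exp_ofReal_mul_I_re, Real.cos_neg, ← hc]
  have hwim : (Complex.exp ((-θ : ℝ) * I)).im = -s := by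
    rw [Complex.exp_ofReal_mul_I_im, Real.sin_neg, ← hs]
  -- the squared modulus
  have habs : ‖(starRingEnd ℂ) τ ^ 2 + Complex.exp (-2 * ↑π * I / ↑p) * τ - τ‖ ^ 2
      = 5 + 4 * c + 2 * Real.sqrt 2 * s := by
    rw [Complex.sq_norm, Complex.normSq_apply]
    simp only [hexp, Complex.sub_re, Complex.add_re, Complex.sub_im, Complex.add_im,
      pow_two, Complex.mul_re, Complex.mul_im, Complex.conj_re, Complex.conj_im,
      hwre, hwim, hτre, hτim]
    linear_combination key_poly (Real.sqrt 2) (Real.sqrt 3) c s h2 h3' hcs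
  -- trig bounds
  have hsθ : s < θ := by rw [hs]; exact Real.sin_lt hθ0
  have hspos : 0 < s := by rw [hs]; exact Real.sin_pos_of_pos_of_lt_pi hθ0 (by linarith)
  have hc1 : c ≤ 1 := by rw [hc]; exact Real.cos_le_one θ
  have hclow : 1 - θ ^ 2 / 2 ≤ c := by rw [hc]; exact Real.one_sub_sq_div_two_le_cos
  have hθsq : θ ^ 2 ≤ 0.09 := by
    rw [pow_two]
    calc θ * θ ≤ 0.3 * 0.3 := mul_le_mul hθle hθle hθ0.le (by norm_num)
      _ = 0.09 := by norm_num
  have hcpos : (0 : ℝ) < 2 * c + 1 := by linarith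
  have hr2pos : (0 : ℝ) < Real.sqrt 2 := Real.sqrt_pos.2 (by norm_num)
  have hr2lt : Real.sqrt 2 < 3 / 2 :=
    (Real.sqrt_lt' (by norm_num)).2 (by norm_num)
  -- the sine factor
  have hSarg : 0 < 3 * π / (p : ℝ) := by positivity
  have hSlt : 3 * π / (p : ℝ) < π := by
    rw [div_lt_iff₀ hppos]
    have h21 : 21 * π ≤ (p : ℝ) * π := mul_le_mul_of_nonneg_right hpR hπ0.le
    linarith
  have hSpos : 0 < Real.sin (3 * π / p) := Real.sin_pos_of_pos_of_lt_pi hSarg hSlt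
  have hdouble : 2 * (3 * π / (p : ℝ)) = 3 * θ := by rw [hθdef]; ring
  have hS2 : Real.sin (3 * π / p) ^ 2 = (1 - c) * (2 * c + 1) ^ 2 / 2 := by
    rw [Real.sin_sq_eq_half_sub, hdouble, Real.cos_three_mul θ, ← hc]
    ring
  have hcoshpos : 0 < Real.cosh δ := Real.cosh_pos δ
  -- product of squares
  have hgoal2 : (Real.cosh δ * Real.sin (3 * π / p)) ^ 2 =
      (5 + 4 * c + 2 * Real.sqrt 2 * s) * (1 - c) / 2 := by
    have hsplit : (Real.cosh δ * Real.sin (3 * π / p)) ^ 2 =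
        Real.cosh δ ^ 2 * Real.sin (3 * π / p) ^ 2 := by ring
    rw [hsplit, hδ, habs, hS2]
    rw [div_mul_eq_mul_div, div_eq_iff (pow_ne_zero 2 hcpos.ne')]
    ring
  -- numeric bound
  have hA : 5 + 4 * c + 2 * Real.sqrt 2 * s ≤ 9.9 := by
    have hm : Real.sqrt 2 * s ≤ 3 / 2 * θ :=
      mul_le_mul hr2lt.le hsθ.le hspos.le (by norm_num)
    linarith
  have hBnn : 0 ≤ 1 - c := by linarith
  have hBle : 1 - c ≤ 0.045 := by linarith
  have hprod : (5 + 4 * c + 2 * Real.sqrt 2 * s) * (1 - c) ≤ 9.9 * 0.045 :=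
    mul_le_mul hA hBle hBnn (by norm_num)
  have hlt : (Real.cosh δ * Real.sin (3 * π / p)) ^ 2 < 1 / 4 := by
    rw [hgoal2]; linarith
  by_contra hcon
  push_neg at hcon
  have hKS : 0 < Real.cosh δ * Real.sin (3 * π / p) := mul_pos hcoshpos hSpos
  have hsq : (1 / 2 : ℝ) * (1 / 2) ≤
      (Real.cosh δ * Real.sin (3 * π / p)) * (Real.cosh δ * Real.sin (3 * π / p)) :=
    mul_le_mul hcon hcon (by norm_num) hKS.le
  rw [pow_two] at hlt
  linarith
end

section
/- Let τ = e^{iπ/3} + e^{−iπ/6}·√2, p = 8, and cosh²(δ_p) = |conj(τ)² + e^{−iπ/4}τ − τ|² / (2cos(π/4) + 1)². Then cosh(δ_p)·sin(π/8) < 1/2. -/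
open Real Complex

theorem jorgensen_sigma1_p8 (τ : ℂ)
    (hτ : τ = Complex.exp (I * π / 3) + Complex.exp (-I * π / 6) * (Real.sqrt 2 : ℂ))
    (δ : ℝ)
    (hδ : Real.cosh δ ^ 2 =
      ‖(starRingEnd ℂ) τ ^ 2 + Complex.exp (-I * π / 4) * τ - τ‖ ^ 2 /
        (2 * Real.cos (π / 4) + 1) ^ 2) :
    Real.cosh δ * Real.sin (π / 8) < 1 / 2 := by
  set a := Real.sqrt 2 with ha'
  set b := Real.sqrt 3 with hb'
  have ha : a ^ 2 = 2 := Real.sq_sqrt (by norm_num)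
  have hb : b ^ 2 = 3 := Real.sq_sqrt (by norm_num)
  have e1 : Complex.exp (I * π / 3) = ⟨1/2, b / 2⟩ := by
    have h : I * (π:ℂ) / 3 = ((π/3 : ℝ) : ℂ) * I := by push_cast; ring
    rw [h, Complex.exp_mul_I, ← Complex.ofReal_cos, ← Complex.ofReal_sin]
    apply Complex.ext <;> simp [Real.cos_pi_div_three, Real.sin_pi_div_three, hb']
  have e2 : Complex.exp (-I * π / 6) = ⟨b/2, -(1/2)⟩ := by
    have h : -I * (π:ℂ) / 6 = ((-(π/6) : ℝ) : ℂ) * I := by push_cast; ring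
    rw [h, Complex.exp_mul_I, ← Complex.ofReal_cos, ← Complex.ofReal_sin]
    apply Complex.ext <;> simp [Real.cos_pi_div_six, Real.sin_pi_div_six, hb']
  have e3 : Complex.exp (-I * π / 4) = ⟨a/2, -(a/2)⟩ := by
    have h : -I * (π:ℂ) / 4 = ((-(π/4) : ℝ) : ℂ) * I := by push_cast; ring
    rw [h, Complex.exp_mul_I, ← Complex.ofReal_cos, ← Complex.ofReal_sin]
    apply Complex.ext <;> simp [Real.cos_pi_div_four, Real.sin_pi_div_four, ha']
  have hτ2 : τ = ⟨1/2 + a*b/2, b/2 - a/2⟩ := by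
    rw [hτ, e1, e2]
    apply Complex.ext <;> simp [Complex.mul_re, Complex.mul_im] <;> ring
  have hz : (starRingEnd ℂ) τ ^ 2 + Complex.exp (-I * π / 4) * τ - τ
      = ⟨(3*a*b + a + 2*b - 2)/4, (a*b - 3*a - 2*b - 2)/4⟩ := by
    rw [hτ2, e3]
    apply Complex.ext <;>
      simp [Complex.mul_re, Complex.mul_im, pow_two, Complex.conj_re, Complex.conj_im]
    · linear_combination ((b^2 + b - 2)/4) * ha + (1/4) * hb
    · linear_combination ((b - 1)/4) * ha + (-(a/2)) * hb
  have habs : ‖(starRingEnd ℂ) τ ^ 2 + Complex.exp (-I * π / 4) * τ - τ‖ ^ 2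
      = 7 + 2 * a := by
    rw [hz, Complex.sq_norm, Complex.normSq_mk]
    linear_combination ((10*b^2 + 10)/16) * ha + ((28 + 8*a)/16) * hb
  have hden : (2 * Real.cos (π / 4) + 1) ^ 2 = 3 + 2 * a := by
    rw [Real.cos_pi_div_four]
    linear_combination ha
  have h3 : (0:ℝ) < 3 + 2 * a := by positivity
  have hc2 : Real.cosh δ ^ 2 * (3 + 2 * a) = 7 + 2 * a := by
    rw [hδ, habs, hden]
    field_simp
  have hs : Real.sin (π / 8) ^ 2 = 1/2 - a/4 := by
    have h1 : Real.cos (π/8) ^ 2 = 1/2 + Real.cos (2 * (π/8)) / 2 := Real.cos_sq (π/8)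
    rw [show 2 * (π/8) = π/4 by ring, Real.cos_pi_div_four] at h1
    have h2 := Real.sin_sq_add_cos_sq (π/8)
    linarith
  have hs0 : 0 < Real.sin (π / 8) :=
    Real.sin_pos_of_pos_of_lt_pi (by positivity) (by linarith [Real.pi_pos])
  have hc1 : 1 ≤ Real.cosh δ := Real.one_le_cosh δ
  have h14 : 7/5 < a := by nlinarith [Real.sqrt_nonneg 2]
  have hx2 : (Real.cosh δ * Real.sin (π/8)) ^ 2 * (3 + 2*a)
      = (7 + 2*a) * (1/2 - a/4) := by
    rw [mul_pow, mul_right_comm, hc2, hs]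
  nlinarith [hx2, ha, h14, hs0, hc1, h3, mul_pos (lt_of_lt_of_le one_pos hc1) hs0]
end

section
/- Let τ = e^{2πi/9} + e^{−iπ/9}·2cos(2π/5) (so |τ|² = 2), let p ≥ 13 be odd, and set cosh²(δ_p) = |conj(τ)² + e^{−2πi/p}τ − τ|² / (2cos(2π/p))². Then cosh(δ_p)·sin(π/(2p)) < 1/2. -/
set_option maxHeartbeats 1000000
open Real Complex

theorem jorgensen_sigma5_odd (τ : ℂ)
    (hτ : τ = Complex.exp (2 * π * I / 9) +
      Complex.exp (-I * π / 9) * (2 * Real.cos (2 * π / 5)))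
    (p : ℕ) (hp : 13 ≤ p) (hodd : Odd p) (δ : ℝ)
    (hδ : Real.cosh δ ^ 2 =
      ‖(starRingEnd ℂ) τ ^ 2 + Complex.exp (-2 * π * I / p) * τ - τ‖ ^ 2 /
        (2 * Real.cos (2 * π / p)) ^ 2) :
    Real.cosh δ * Real.sin (π / (2 * p)) < 1 / 2 := by
  have hπ := Real.pi_pos
  have hπ315 := Real.pi_lt_d2
  have hπ3 := Real.pi_gt_d6
  have hp' : (13:ℝ) ≤ (p:ℝ) := by exact_mod_cast hp
  have hp0 : (0:ℝ) < p := by linarith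
  -- √3 bounds
  have hsqrt3 : (1.7:ℝ) ≤ Real.sqrt 3 := by
    rw [show (3:ℝ) = 1.7^2 + 0.11 by norm_num]
    nlinarith [Real.sq_sqrt (show (0:ℝ) ≤ 1.7^2 + 0.11 by norm_num),
      Real.sqrt_nonneg ((1.7:ℝ)^2 + 0.11)]
  -- bound sin(π/(2p))
  have hs : Real.sin (π / (2*p)) ≤ π/26 := by
    calc Real.sin (π/(2*p)) ≤ π/(2*p) := Real.sin_le (by positivity)
    _ ≤ π/26 := by
        apply div_le_div_of_nonneg_left (le_of_lt hπ) (by norm_num)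
        linarith
  have hs0 : 0 ≤ Real.sin (π / (2*p)) := by
    apply Real.sin_nonneg_of_nonneg_of_le_pi (by positivity)
    calc π/(2*p) ≤ π/26 := by
          apply div_le_div_of_nonneg_left (le_of_lt hπ) (by norm_num); linarith
    _ ≤ π := by linarith
  -- bound cos(2π/p)
  have hc : Real.sqrt 3 / 2 ≤ Real.cos (2*π/p) := by
    rw [← Real.cos_pi_div_six]
    apply Real.cos_le_cos_of_nonneg_of_le_pi (by positivity) (by linarith)
    rw [div_le_div_iff₀ hp0 (by norm_num)]
    nlinarith
  have hc0 : 0 < Real.cos (2*π/p) := by nlinarith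
  -- |τ| ≤ 2
  have hcos5 : Real.cos (2*π/5) ≤ 1/2 := by
    rw [← Real.cos_pi_div_three]
    apply Real.cos_le_cos_of_nonneg_of_le_pi (by positivity) (by nlinarith) (by nlinarith)
  have hcos50 : 0 ≤ Real.cos (2*π/5) :=
    Real.cos_nonneg_of_mem_Icc ⟨by nlinarith, by nlinarith⟩
  have hτ2 : ‖τ‖ ≤ 2 := by
    rw [hτ]
    calc ‖Complex.exp (2 * π * I / 9) +
          Complex.exp (-I * π / 9) * (2 * Real.cos (2 * π / 5))‖
        ≤ ‖Complex.exp (2 * π * I / 9)‖ +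
          ‖Complex.exp (-I * π / 9)‖ * ‖(2:ℂ) * (Real.cos (2 * π / 5) : ℝ)‖ := by
          refine le_trans (norm_add_le _ _) ?_
          rw [norm_mul]
    _ ≤ 2 := by
        rw [Complex.norm_exp, Complex.norm_exp]
        simp only [norm_mul, Complex.norm_two, Complex.norm_real, Real.norm_eq_abs]
        have h1 : (2 * (π:ℂ) * I / 9).re = 0 := by simp
        have h2 : (-I * (π:ℂ) / 9).re = 0 := by simp
        rw [h1, h2, Real.exp_zero]
        rw [_root_.abs_of_nonneg hcos50]
        linarith
  -- bound on exp(-2πI/p) - 1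
  have habs : ‖(-2 * π * I / p : ℂ)‖ = 2*π/p := by
    simp only [norm_div, norm_mul, norm_neg, Complex.norm_two, Complex.norm_I,
      Complex.norm_real, Real.norm_eq_abs, Complex.norm_natCast]
    rw [abs_of_pos hπ]
    ring
  have he : ‖Complex.exp (-2 * π * I / p) - 1‖ ≤ 4*π/p := by
    have h1 : ‖(-2 * π * I / p : ℂ)‖ ≤ 1 := by
      rw [habs, div_le_one hp0]; nlinarith
    have := Complex.norm_exp_sub_one_le h1
    rw [habs] at this
    calc ‖Complex.exp (-2 * π * I / p) - 1‖ ≤ 2 * (2*π/p) := this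
    _ = 4*π/p := by ring
  -- bound on A
  set A := ‖(starRingEnd ℂ) τ ^ 2 + Complex.exp (-2 * π * I / p) * τ - τ‖ with hA
  have hAbound : A ≤ 4 + 8*π/13 := by
    have hrw : (starRingEnd ℂ) τ ^ 2 + Complex.exp (-2 * π * I / p) * τ - τ
        = (starRingEnd ℂ) τ ^ 2 + (Complex.exp (-2 * π * I / p) - 1) * τ := by ring
    rw [hA, hrw]
    calc ‖(starRingEnd ℂ) τ ^ 2 + (Complex.exp (-2 * π * I / p) - 1) * τ‖
        ≤ ‖(starRingEnd ℂ) τ‖ ^ 2 +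
          ‖Complex.exp (-2 * π * I / p) - 1‖ * ‖τ‖ := by
          refine le_trans (norm_add_le _ _) ?_
          rw [norm_pow, norm_mul]
    _ ≤ 2^2 + (4*π/p) * 2 := by
        rw [Complex.norm_conj]
        have h1 : ‖τ‖ ^ 2 ≤ 2^2 := pow_le_pow_left₀ (norm_nonneg τ) hτ2 2
        have h2 := mul_le_mul he hτ2 (norm_nonneg τ) (by positivity)
        linarith
    _ ≤ 4 + 8*π/13 := by
        have : 4*π/p ≤ 4*π/13 := by
          apply div_le_div_of_nonneg_left (by positivity) (by norm_num) hp'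
        nlinarith
  -- cosh δ bound
  have hcosh : Real.cosh δ ≤ (4 + 8*π/13) / (Real.sqrt 3 / 2 * 2) := by
    have hB : Real.sqrt 3 ≤ 2 * Real.cos (2*π/p) := by linarith
    have hC0 : (0:ℝ) < 4 + 8*π/13 := by positivity
    have hsq : Real.cosh δ ^ 2 ≤ ((4 + 8*π/13) / Real.sqrt 3) ^ 2 := by
      rw [hδ, div_pow]
      have hnum : A ^ 2 ≤ (4 + 8*π/13) ^ 2 := pow_le_pow_left₀ (norm_nonneg _) hAbound 2
      have hden : Real.sqrt 3 ^ 2 ≤ (2 * Real.cos (2*π/p)) ^ 2 :=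
        pow_le_pow_left₀ (Real.sqrt_nonneg 3) hB 2
      exact div_le_div₀ (by positivity) hnum (by positivity) hden
    have h1 : Real.cosh δ = Real.sqrt (Real.cosh δ ^ 2) := (Real.sqrt_sq (Real.cosh_pos δ).le).symm
    rw [show Real.sqrt 3 / 2 * 2 = Real.sqrt 3 by ring]
    rw [h1]
    calc Real.sqrt (Real.cosh δ ^ 2) ≤ Real.sqrt (((4 + 8*π/13) / Real.sqrt 3) ^ 2) :=
          Real.sqrt_le_sqrt hsq
    _ = (4 + 8*π/13) / Real.sqrt 3 := Real.sqrt_sq (by positivity)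
  -- combine
  have hstep : Real.cosh δ * Real.sin (π/(2*p)) ≤ (4 + 8*π/13) / Real.sqrt 3 * (π/26) := by
    rw [show Real.sqrt 3 / 2 * 2 = Real.sqrt 3 by ring] at hcosh
    apply mul_le_mul hcosh hs hs0 (by positivity)
  refine lt_of_le_of_lt hstep ?_
  rw [div_mul_eq_mul_div, div_lt_iff₀ (by positivity), div_mul_eq_mul_div, lt_div_iff₀ (by norm_num)]
  nlinarith
end

section
/- Let τ = (−1−i√7)/2 and p = 20. Set α = π/5 and cosh²(δ) = |conj(τ)² + e^{−iπ/10}τ − τ|² / (2cos(π/10))². Then cos(π/3) < cosh(δ)·sin(α) < cos(π/4), and cosh(δ)·sin(α) ≠ cos(2α). -/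
open Real Complex

set_option maxHeartbeats 1000000 in
theorem knapp_sigma4bar_p20 (τ : ℂ) (hτ : τ = (-1 - I * Real.sqrt 7) / 2)
    (α δ : ℝ) (hα : α = π / 5)
    (hδ : Real.cosh δ ^ 2 =
      ‖(starRingEnd ℂ) τ ^ 2 + Complex.exp (-I * π / 10) * τ - τ‖ ^ 2 /
        (2 * Real.cos (π / 10)) ^ 2)
    (hδ0 : 0 ≤ δ) :
    Real.cos (π / 3) < Real.cosh δ * Real.sin α ∧
    Real.cosh δ * Real.sin α < Real.cos (π / 4) ∧
    Real.cosh δ * Real.sin α ≠ Real.cos (2 * α) := by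
  set s : ℝ := Real.sin (π/10) with hs
  set c : ℝ := Real.cos (π/10) with hc
  have h5 : Real.sqrt 5 ^ 2 = 5 := Real.sq_sqrt (by norm_num)
  have h5b : (2.2360679 : ℝ) < Real.sqrt 5 ∧ Real.sqrt 5 < 2.236068 := by
    constructor
    · nlinarith [Real.sqrt_nonneg 5, h5]
    · nlinarith [Real.sqrt_nonneg 5, h5]
  have h7 : Real.sqrt 7 ^ 2 = 7 := Real.sq_sqrt (by norm_num)
  have h7b : (2.6457513 : ℝ) < Real.sqrt 7 ∧ Real.sqrt 7 < 2.6457514 := by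
    constructor
    · nlinarith [Real.sqrt_nonneg 7, h7]
    · nlinarith [Real.sqrt_nonneg 7, h7]
  have hscos : s = Real.cos (2 * (π/5)) := by
    rw [hs, ← Real.cos_pi_div_two_sub]; ring_nf
  have hsval : s = (Real.sqrt 5 - 1) / 4 := by
    rw [hscos, Real.cos_two_mul, Real.cos_pi_div_five]
    nlinarith [h5]
  have hcs : c ^ 2 = 1 - s ^ 2 := by
    have := Real.sin_sq_add_cos_sq (π/10)
    rw [← hs, ← hc] at this; nlinarith
  have hcpos : 0 < c :=
    Real.cos_pos_of_mem_Ioo (by constructor <;> nlinarith [pi_gt_three, pi_lt_d2])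
  have hsb : (0.309016 : ℝ) < s ∧ s < 0.309017 := by
    rw [hsval]; constructor <;> nlinarith [h5b.1, h5b.2]
  have hcb : (0.951056 : ℝ) < c ∧ c < 0.951057 := by
    constructor
    · nlinarith [sq_nonneg (c - 0.951056), hsb.1, hsb.2]
    · nlinarith [sq_nonneg (c - 0.951057), hsb.1, hsb.2]
  -- rewrite the complex exponential
  have hexp : Complex.exp (-I * π / 10) = (c : ℂ) - (s : ℂ) * I := by
    have h : (-I * π / 10 : ℂ) = ((-(π/10) : ℝ) : ℂ) * I := by push_cast; ring
    rw [h, Complex.exp_mul_I, ← Complex.ofReal_cos, ← Complex.ofReal_sin,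
      Real.cos_neg, Real.sin_neg, hs, hc]
    push_cast; ring
  have h7c : ((Real.sqrt 7 : ℝ) : ℂ) ^ 2 = 7 := by
    norm_cast
  have hNeq : (starRingEnd ℂ) τ ^ 2 + Complex.exp (-I * π / 10) * τ - τ =
      (((-2 - c - Real.sqrt 7 * s) / 2 : ℝ) : ℂ) +
      (((s - Real.sqrt 7 * c) / 2 : ℝ) : ℂ) * I := by
    rw [hτ, hexp]
    simp only [map_div₀, map_sub, map_neg, map_one, map_mul, Complex.conj_I,
      Complex.conj_ofReal, map_ofNat]
    push_cast
    linear_combination (((Real.sqrt 7 : ℝ):ℂ)^2/4 + (s:ℂ)*((Real.sqrt 7 : ℝ):ℂ)/2) * Complex.I_sq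
      + (-1/4 : ℂ) * h7c
  have habs : ‖(starRingEnd ℂ) τ ^ 2 + Complex.exp (-I * π / 10) * τ - τ‖ ^ 2 =
      ((-2 - c - Real.sqrt 7 * s) / 2) ^ 2 + ((s - Real.sqrt 7 * c) / 2) ^ 2 := by
    rw [hNeq, Complex.sq_norm, Complex.normSq_add_mul_I]
  rw [habs] at hδ
  have hsin : Real.sin α = 2 * s * c := by
    rw [hα, hs, hc, show (π/5 : ℝ) = 2 * (π/10) by ring, Real.sin_two_mul]
  have hX2 : (Real.cosh δ * Real.sin α) ^ 2 = s ^ 2 * (3 + c + Real.sqrt 7 * s) := by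
    rw [mul_pow, hδ, hsin]
    field_simp
    linear_combination (s^2*(1 + Real.sqrt 7 ^ 2)) * hcs + (s^2) * h7
  have hcosh1 : (1 : ℝ) ≤ Real.cosh δ := Real.one_le_cosh δ
  have hsinpos : 0 < Real.sin α := by rw [hsin]; nlinarith [hsb.1, hcb.1]
  have hXpos : 0 < Real.cosh δ * Real.sin α := by positivity
  have hs2l : (0.0954908 : ℝ) < s ^ 2 := by nlinarith [hsb.1, hsb.2]
  have hs2u : s ^ 2 < (0.0954916 : ℝ) := by nlinarith [hsb.1, hsb.2]
  have hfl : (4.76863 : ℝ) < 3 + c + Real.sqrt 7 * s := by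
    nlinarith [hcb.1, h7b.1, hsb.1, hsb.2]
  have hfu : 3 + c + Real.sqrt 7 * s < (4.76877 : ℝ) := by
    nlinarith [hcb.2, h7b.2, hsb.1, hsb.2]
  have hX2lb : (1/4 : ℝ) < (Real.cosh δ * Real.sin α) ^ 2 := by
    have h' := mul_lt_mul'' hs2l hfl (by norm_num) (by norm_num)
    have hn : (1/4 : ℝ) < 0.0954908 * 4.76863 := by norm_num
    rw [hX2]; linarith [h', hn]
  have hXub2 : (Real.cosh δ * Real.sin α) ^ 2 < 1/2 := by
    have h' := mul_lt_mul'' hs2u hfu (sq_nonneg s) (by linarith)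
    have hn : (0.0954916 : ℝ) * 4.76877 < 1/2 := by norm_num
    rw [hX2]; linarith [h', hn]
  clear hδ hNeq habs hexp hτ h7c hX2 hsin hsval hcs h5b h5 h7b h7 hs2l hs2u hfl hfu hcb hcpos
  have hXlb : (1/2 : ℝ) < Real.cosh δ * Real.sin α := by
    nlinarith [hXpos, hX2lb]
  refine ⟨?_, ?_, ?_⟩
  · rw [Real.cos_pi_div_three]; exact hXlb
  · rw [Real.cos_pi_div_four]
    have h2 : Real.sqrt 2 ^ 2 = 2 := Real.sq_sqrt (by norm_num)
    nlinarith [Real.sqrt_nonneg 2, hXub2, hXpos,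
      sq_nonneg (Real.sqrt 2 / 2 - Real.cosh δ * Real.sin α)]
  · have hcos2 : Real.cos (2 * α) = s := by rw [hα, ← hscos]
    intro h
    rw [hcos2] at h
    linarith [hsb.2, hXlb, h.le]
end
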